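/- Let ℓ ≥ 6 and q ≤ 3 be integers, let H be the complete graph K_4 on vertices v_1, v_2, v_3, v_4, and let c_0, c_1, …, c_q be a prescribed sequence of colors for v_4 with c_i ≠ c_{i+1} for each i. Then for every pair of proper ℓ-colorings α' and β' of H with α'(v_4) = c_0 and β'(v_4) = c_q, there exists a transformation from α' to β' recoloring each vertex at most 3 times in which v_4 follows the prescribed coloring order c_0, c_1, …, c_q. -/
import Mathlib


open SimpleGraph

/-- A proper coloring of `G` with `ℓ` colors: adjacent vertices get distinct colors. -/
def IsProperColoring {V : Type} (G : SimpleGraph V) {ℓ : ℕ} (c : V → Fin ℓ) : Prop :=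
  ∀ ⦃u v : V⦄, G.Adj u v → c u ≠ c v

/-- `c` is a transformation sequence from `α` to `β`: a sequence of proper colorings
starting at `α`, ending at `β`, in which consecutive colorings differ on exactly one vertex. -/
def IsTransformSeq {V : Type} (G : SimpleGraph V) {ℓ m : ℕ}
    (c : Fin (m + 1) → V → Fin ℓ) (α β : V → Fin ℓ) : Prop :=
  c 0 = α ∧ c (Fin.last m) = β ∧ (∀ i, IsProperColoring G (c i)) ∧
    ∀ i : Fin m, ∃! v : V, c i.castSucc v ≠ c i.succ v

/-- The number of steps of the sequence `c` at which the vertex `v` is recolored. -/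
def RecolorCount {V : Type} {ℓ m : ℕ} (c : Fin (m + 1) → V → Fin ℓ) (v : V) : ℕ :=
  (Finset.univ.filter fun i : Fin m => c i.castSucc v ≠ c i.succ v).card

/-- `H` is a minor of `G`: there are pairwise disjoint nonempty branch sets in `G`, each
inducing a connected subgraph, with an edge of `G` between the branch sets of any two
vertices adjacent in `H`. -/
def IsMinor {W V : Type} (H : SimpleGraph W) (G : SimpleGraph V) : Prop :=
  ∃ B : W → Set V,
    (∀ h, (B h).Nonempty) ∧
    (Pairwise fun h h' => Disjoint (B h) (B h')) ∧
    (∀ h, (G.induce (B h)).Connected) ∧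
    ∀ ⦃h h'⦄, H.Adj h h' → ∃ u ∈ B h, ∃ v ∈ B h', G.Adj u v

/-- Every edge of `G` lies on at most one cycle: two cycles sharing an edge have the
same edge set. -/
def EdgeOnAtMostOneCycle {V : Type} (G : SimpleGraph V) : Prop :=
  ∀ (u v : V) (p : G.Walk u u) (q : G.Walk v v), p.IsCycle → q.IsCycle →
    ∀ e, e ∈ p.edges → e ∈ q.edges → ∀ e', (e' ∈ p.edges ↔ e' ∈ q.edges)

/-- A cactus graph: connected and every edge lies on at most one cycle. -/
def IsCactus {V : Type} (G : SimpleGraph V) : Prop :=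
  G.Connected ∧ EdgeOnAtMostOneCycle G

/-- A chordal graph: every cycle of length at least `4` has a chord; equivalently,
there is no induced cycle of length at least `4`. -/
def IsChordal {V : Type} (G : SimpleGraph V) : Prop :=
  ∀ (v : V) (p : G.Walk v v), p.IsCycle → 4 ≤ p.length →
    ∃ u w, u ∈ p.support ∧ w ∈ p.support ∧ G.Adj u w ∧ s(u, w) ∉ p.edges

/-- The sequence of successive colors taken by the vertex `v` along the sequence `c`
(its starting color followed by the new color at each of its recolorings). -/
def ColorTrace {V : Type} {ℓ m : ℕ} (c : Fin (m + 1) → V → Fin ℓ) (v : V) : List (Fin ℓ) :=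
  (List.ofFn fun i : Fin (m + 1) => c i v).destutter (· ≠ ·)

namespace K4X

variable {ℓ : ℕ}

abbrev Col (ℓ : ℕ) := Fin 4 → Fin ℓ

def ap (γ : Col ℓ) : List (Fin 4 × Fin ℓ) → Col ℓ
  | [] => γ
  | m :: ms => ap (Function.update γ m.1 m.2) ms

def Good (γ : Col ℓ) : List (Fin 4 × Fin ℓ) → Prop
  | [] => True
  | m :: ms => m.2 ≠ γ m.1 ∧ (∀ u, u ≠ m.1 → m.2 ≠ γ u) ∧
      Good (Function.update γ m.1 m.2) ms

def cnt (v : Fin 4) (ms : List (Fin 4 × Fin ℓ)) : ℕ :=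
  (ms.filter (fun p => p.1 = v)).length

def trc (v : Fin 4) (ms : List (Fin 4 × Fin ℓ)) : List (Fin ℓ) :=
  (ms.filter (fun p => p.1 = v)).map Prod.snd

lemma proper_iff_inj (γ : Col ℓ) :
    IsProperColoring (⊤ : SimpleGraph (Fin 4)) γ ↔ Function.Injective γ := by
  constructor
  · intro h x y hxy
    by_contra hne
    exact h (by simpa [top_adj] using hne) hxy
  · intro h u v huv he
    have hne : u ≠ v := by simpa [top_adj] using huv
    exact hne (h he)

lemma inj_update {γ : Col ℓ} (hγ : Function.Injective γ) {v : Fin 4} {b : Fin ℓ}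
    (h : ∀ u, u ≠ v → b ≠ γ u) : Function.Injective (Function.update γ v b) := by
  intro x y hxy
  by_cases hx : x = v <;> by_cases hy : y = v
  · simp [hx, hy]
  · subst hx; rw [Function.update_self, Function.update_of_ne hy] at hxy
    exact absurd hxy (h y hy)
  · subst hy; rw [Function.update_self, Function.update_of_ne hx] at hxy
    exact absurd hxy.symm (h x hx)
  · rw [Function.update_of_ne hx, Function.update_of_ne hy] at hxy
    exact hγ hxy

lemma exists_notin (hℓ : 6 ≤ ℓ) (s : Finset (Fin ℓ)) (h : s.card ≤ 5) :
    ∃ f : Fin ℓ, f ∉ s := by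
  by_contra h'
  push_neg at h'
  have hs : (Finset.univ : Finset (Fin ℓ)) ⊆ s := fun x _ => h' x
  have := Finset.card_le_card hs
  simp [Fintype.card_fin] at this
  omega

lemma good_append {γ : Col ℓ} {l₁ l₂ : List (Fin 4 × Fin ℓ)} :
    Good γ (l₁ ++ l₂) ↔ Good γ l₁ ∧ Good (ap γ l₁) l₂ := by
  induction l₁ generalizing γ with
  | nil => simp [Good, ap]
  | cons m ms ih => simp [Good, ap, ih, and_assoc]

lemma ap_append (γ : Col ℓ) (l₁ l₂ : List (Fin 4 × Fin ℓ)) :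
    ap γ (l₁ ++ l₂) = ap (ap γ l₁) l₂ := by
  induction l₁ generalizing γ with
  | nil => rfl
  | cons m ms ih => simp [ap, ih]

lemma cnt_append (v : Fin 4) (l₁ l₂ : List (Fin 4 × Fin ℓ)) :
    cnt v (l₁ ++ l₂) = cnt v l₁ + cnt v l₂ := by simp [cnt]

lemma trc_append (v : Fin 4) (l₁ l₂ : List (Fin 4 × Fin ℓ)) :
    trc v (l₁ ++ l₂) = trc v l₁ ++ trc v l₂ := by simp [trc]

lemma inj_ap {γ : Col ℓ} (hγ : Function.Injective γ) {ms : List (Fin 4 × Fin ℓ)}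
    (h : Good γ ms) : Function.Injective (ap γ ms) := by
  induction ms generalizing γ with
  | nil => exact hγ
  | cons m ms ih =>
    obtain ⟨h1, h2, h3⟩ := h
    exact ih (inj_update hγ h2) h3

lemma cnt_cons_same (v : Fin 4) (x : Fin ℓ) (ms : List (Fin 4 × Fin ℓ)) :
    cnt v ((v, x) :: ms) = cnt v ms + 1 := by
  simp [cnt, List.filter_cons]

lemma cnt_cons_diff {u v : Fin 4} (h : u ≠ v) (x : Fin ℓ) (ms : List (Fin 4 × Fin ℓ)) :
    cnt v ((u, x) :: ms) = cnt v ms := by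
  simp [cnt, List.filter_cons, h]

/-- One walk step: recolor vertex 3 to `t`, first moving away (out of `F ∪ {t}`)
the unique helper holding `t`, if any. -/
lemma step (hℓ : 6 ≤ ℓ) (γ : Col ℓ) (hγ : Function.Injective γ)
    (t : Fin ℓ) (ht : t ≠ γ 3) (F : Finset (Fin ℓ)) (hF : F.card ≤ 1) :
    ∃ ms : List (Fin 4 × Fin ℓ),
      Good γ ms ∧ Function.Injective (ap γ ms) ∧
      ap γ ms 3 = t ∧
      cnt 3 ms = 1 ∧ trc 3 ms = [t] ∧
      (∀ u, u ≠ 3 → γ u ≠ t → ap γ ms u = γ u ∧ cnt u ms = 0) ∧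
      (∀ u, u ≠ 3 → γ u = t → cnt u ms = 1 ∧ ap γ ms u ≠ t ∧ ap γ ms u ∉ F) := by
  by_cases hex : ∃ h : Fin 4, h ≠ 3 ∧ γ h = t
  · obtain ⟨h, hh3, hht⟩ := hex
    obtain ⟨f, hf⟩ := exists_notin hℓ ({γ 0, γ 1, γ 2, γ 3} ∪ F) (by
      refine le_trans (Finset.card_union_le _ _) ?_
      have h4 : ({γ 0, γ 1, γ 2, γ 3} : Finset (Fin ℓ)).card ≤ 4 := by
        refine le_trans (Finset.card_insert_le _ _) ?_
        refine Nat.succ_le_succ (le_trans (Finset.card_insert_le _ _) ?_)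
        refine Nat.succ_le_succ (le_trans (Finset.card_insert_le _ _) ?_)
        simp
      omega)
    have hfg : ∀ u : Fin 4, f ≠ γ u := by
      intro u
      fin_cases u <;>
        (intro e; apply hf; simp [e])
    have hfF : f ∉ F := fun e => hf (by simp [e])
    have hft : f ≠ t := by rw [← hht]; exact hfg h
    refine ⟨[(h, f), (3, t)], ⟨hfg h, fun u _ => hfg u, ?_, ?_, trivial⟩, ?_, ?_, ?_, ?_, ?_, ?_⟩
    · show t ≠ Function.update γ h f 3
      rw [Function.update_of_ne (fun e => hh3 e.symm)]
      exact ht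
    · intro u hu
      by_cases huh : u = h
      · subst huh; rw [Function.update_self]; exact fun e => hft e.symm
      · rw [Function.update_of_ne huh]
        rw [← hht]
        exact fun e => huh (hγ e.symm)
    · show Function.Injective (Function.update (Function.update γ h f) 3 t)
      refine inj_update (inj_update hγ (fun u _ => hfg u)) ?_
      intro u hu
      by_cases huh : u = h
      · subst huh; rw [Function.update_self]; exact fun e => hft e.symm
      · rw [Function.update_of_ne huh, ← hht]
        exact fun e => huh (hγ e.symm)
    · show Function.update (Function.update γ h f) 3 t 3 = t
      rw [Function.update_self]
    · simp [cnt, List.filter_cons, hh3]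
    · simp [trc, List.filter_cons, hh3]
    · intro u hu hut
      have huh : u ≠ h := fun e => hut (e ▸ hht)
      constructor
      · show Function.update (Function.update γ h f) 3 t u = γ u
        rw [Function.update_of_ne hu, Function.update_of_ne huh]
      · have e1 : ¬ (h = u) := fun e => huh e.symm
        have e2 : ¬ ((3 : Fin 4) = u) := fun e => hu e.symm
        simp [cnt, List.filter_cons, e1, e2]
    · intro u hu hut
      have huh : u = h := hγ (hut.trans hht.symm)
      subst huh
      refine ⟨?_, ?_, ?_⟩
      · have e2 : ¬ ((3 : Fin 4) = u) := fun e => hu e.symm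
        simp [cnt, List.filter_cons, e2]
      · show Function.update (Function.update γ u f) 3 t u ≠ t
        rw [Function.update_of_ne hu, Function.update_self]
        exact hft
      · show Function.update (Function.update γ u f) 3 t u ∉ F
        rw [Function.update_of_ne hu, Function.update_self]
        exact hfF
  · push_neg at hex
    refine ⟨[(3, t)], ⟨ht, fun u hu => fun e => hex u hu e.symm, trivial⟩, ?_, ?_, ?_, ?_, ?_, ?_⟩
    · show Function.Injective (Function.update γ 3 t)
      exact inj_update hγ (fun u hu => fun e => hex u hu e.symm)
    · show Function.update γ 3 t 3 = t
      rw [Function.update_self]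
    · simp [cnt, List.filter_cons]
    · simp [trc, List.filter_cons]
    · intro u hu _
      constructor
      · show Function.update γ 3 t u = γ u
        rw [Function.update_of_ne hu]
      · have e2 : ¬ ((3 : Fin 4) = u) := fun e => hu e.symm
        simp [cnt, List.filter_cons, e2]
    · intro u hu hut
      exact absurd hut (hex u hu)


/-- Finish the vertices `a` (budget 2) and `b` (budget 1), when `s` and `3` are
already at their target colors. -/
lemma fin2 (hℓ : 6 ≤ ℓ) (γ β : Col ℓ)
    (hγ : Function.Injective γ) (hβ : Function.Injective β)
    (s a b : Fin 4)
    (hcov : ∀ v : Fin 4, v = s ∨ v = a ∨ v = b ∨ v = 3)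
    (hs3 : s ≠ 3) (ha3 : a ≠ 3) (hb3 : b ≠ 3)
    (hsa : s ≠ a) (hsb : s ≠ b) (hab : a ≠ b)
    (h3 : γ 3 = β 3) (hss : γ s = β s) :
    ∃ ms, Good γ ms ∧ ap γ ms = β ∧
      cnt a ms ≤ 2 ∧ cnt b ms ≤ 1 ∧ cnt s ms = 0 ∧ cnt 3 ms = 0 ∧
      (γ a ≠ β b → cnt a ms ≤ 1) := by
  have nas : ¬(a = s) := fun e => hsa e.symm
  have nbs : ¬(b = s) := fun e => hsb e.symm
  have n3s : ¬((3:Fin 4) = s) := fun e => hs3 e.symm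
  have nba : ¬(b = a) := fun e => hab e.symm
  have n3a : ¬((3:Fin 4) = a) := fun e => ha3 e.symm
  have n3b : ¬((3:Fin 4) = b) := fun e => hb3 e.symm
  have hβd : ∀ x y : Fin 4, x ≠ y → β x ≠ β y := fun x y h e => h (hβ e)
  have hγd : ∀ x y : Fin 4, x ≠ y → γ x ≠ γ y := fun x y h e => h (hγ e)
  by_cases haa : γ a = β a <;> by_cases hbb : γ b = β b
  · refine ⟨[], trivial, ?_, by simp [cnt], by simp [cnt], by simp [cnt], by simp [cnt],
      fun _ => by simp [cnt]⟩
    funext v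
    rcases hcov v with h|h|h|h <;> subst h
    exacts [hss, haa, hbb, h3]
  · -- only b moves
    refine ⟨[(b, β b)], ⟨fun e => hbb e.symm, ?_, trivial⟩, ?_, ?_, ?_, ?_, ?_, ?_⟩
    · intro u hu
      rcases hcov u with h|h|h|h
      · rw [h, hss]; exact hβd b s nbs
      · rw [h, haa]; exact hβd b a nba
      · exact absurd h hu
      · rw [h, h3]; exact hβd b 3 hb3
    · funext v
      rcases hcov v with h|h|h|h <;> subst h <;>
        simp [ap, Function.update_apply, nas, nbs, n3s, nba, n3a, n3b, hsa, hsb, hab,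
          hs3, ha3, hb3, hss, haa, h3]
    · simp [cnt, List.filter_cons, nba]
    · simp [cnt, List.filter_cons]
    · simp [cnt, List.filter_cons, nbs]
    · simp [cnt, List.filter_cons, hb3]
    · intro _; simp [cnt, List.filter_cons, nba]
  · -- only a moves
    refine ⟨[(a, β a)], ⟨fun e => haa e.symm, ?_, trivial⟩, ?_, ?_, ?_, ?_, ?_, ?_⟩
    · intro u hu
      rcases hcov u with h|h|h|h
      · rw [h, hss]; exact hβd a s nas
      · exact absurd h hu
      · rw [h, hbb]; exact hβd a b hab
      · rw [h, h3]; exact hβd a 3 ha3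
    · funext v
      rcases hcov v with h|h|h|h <;> subst h <;>
        simp [ap, Function.update_apply, nas, nbs, n3s, nba, n3a, n3b, hsa, hsb, hab,
          hs3, ha3, hb3, hss, hbb, h3]
    · simp [cnt, List.filter_cons]
    · simp [cnt, List.filter_cons, hab]
    · simp [cnt, List.filter_cons, nas]
    · simp [cnt, List.filter_cons, ha3]
    · intro _; simp [cnt, List.filter_cons, hab]
  · -- both move
    by_cases hba : γ b = β a
    · by_cases habb : γ a = β b
      · -- swap: a → f, b → β b, a → β a
        obtain ⟨f, hf⟩ := exists_notin hℓ {γ s, γ a, γ b, γ 3} (by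
          refine le_trans (Finset.card_insert_le _ _) ?_
          refine Nat.succ_le_succ (le_trans (Finset.card_insert_le _ _) ?_)
          refine Nat.succ_le_succ (le_trans (Finset.card_insert_le _ _) ?_)
          simp)
        have hfs : f ≠ γ s := fun e => hf (by simp [e])
        have hfa : f ≠ γ a := fun e => hf (by simp [e])
        have hfb : f ≠ γ b := fun e => hf (by simp [e])
        have hf3 : f ≠ γ 3 := fun e => hf (by simp [e])
        refine ⟨[(a, f), (b, β b), (a, β a)], ⟨hfa, ?_, ?_, ?_, ?_, ?_, trivial⟩,
          ?_, ?_, ?_, ?_, ?_, ?_⟩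
        · intro u hu
          rcases hcov u with h|h|h|h
          exacts [h ▸ hfs, absurd h hu, h ▸ hfb, h ▸ hf3]
        · -- β b ≠ (update γ a f) b = γ b
          rw [Function.update_of_ne nba]
          exact fun e => hbb e.symm
        · intro u hu
          rcases hcov u with h|h|h|h
          · rw [h, Function.update_of_ne hsa, hss]; exact hβd b s nbs
          · rw [h, Function.update_self, ← habb]; exact fun e => hfa e.symm
          · exact absurd h hu
          · rw [h, Function.update_of_ne n3a, h3]; exact hβd b 3 hb3
        · -- β a ≠ (update (update γ a f) b (β b)) a = f
          rw [Function.update_of_ne hab, Function.update_self]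
          exact fun e => hfb (e.symm.trans hba.symm)
        · intro u hu
          rcases hcov u with h|h|h|h
          · rw [h, Function.update_of_ne hsb, Function.update_of_ne hsa, hss]
            exact hβd a s nas
          · exact absurd h hu
          · rw [h, Function.update_self]; exact hβd a b hab
          · rw [h, Function.update_of_ne n3b, Function.update_of_ne n3a, h3]
            exact hβd a 3 ha3
        · funext v
          rcases hcov v with h|h|h|h <;> subst h <;>
            simp [ap, Function.update_apply, nas, nbs, n3s, nba, n3a, n3b, hsa, hsb, hab,
              hs3, ha3, hb3, hss, h3]
        · simp [cnt, List.filter_cons, nba]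
        · simp [cnt, List.filter_cons, hab]
        · simp [cnt, List.filter_cons, nas, nbs]
        · simp [cnt, List.filter_cons, ha3, hb3]
        · intro hcontra; exact absurd habb hcontra
      · -- b → β b then a → β a
        refine ⟨[(b, β b), (a, β a)], ⟨fun e => hbb e.symm, ?_, ?_, ?_, trivial⟩,
          ?_, ?_, ?_, ?_, ?_, ?_⟩
        · intro u hu
          rcases hcov u with h|h|h|h
          · rw [h, hss]; exact hβd b s nbs
          · rw [h]; exact fun e => habb e.symm
          · exact absurd h hu
          · rw [h, h3]; exact hβd b 3 hb3
        · rw [Function.update_of_ne hab]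
          exact fun e => haa e.symm
        · intro u hu
          rcases hcov u with h|h|h|h
          · rw [h, Function.update_of_ne hsb, hss]; exact hβd a s nas
          · exact absurd h hu
          · rw [h, Function.update_self]; exact hβd a b hab
          · rw [h, Function.update_of_ne n3b, h3]; exact hβd a 3 ha3
        · funext v
          rcases hcov v with h|h|h|h <;> subst h <;>
            simp [ap, Function.update_apply, nas, nbs, n3s, nba, n3a, n3b, hsa, hsb, hab,
              hs3, ha3, hb3, hss, h3]
        · simp [cnt, List.filter_cons, nba]
        · simp [cnt, List.filter_cons, hab]
        · simp [cnt, List.filter_cons, nas, nbs]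
        · simp [cnt, List.filter_cons, ha3, hb3]
        · intro _; simp [cnt, List.filter_cons, nba]
    · -- a → β a then b → β b
      refine ⟨[(a, β a), (b, β b)], ⟨fun e => haa e.symm, ?_, ?_, ?_, trivial⟩,
        ?_, ?_, ?_, ?_, ?_, ?_⟩
      · intro u hu
        rcases hcov u with h|h|h|h
        · rw [h, hss]; exact hβd a s nas
        · exact absurd h hu
        · rw [h]; exact fun e => hba e.symm
        · rw [h, h3]; exact hβd a 3 ha3
      · rw [Function.update_of_ne nba]
        exact fun e => hbb e.symm
      · intro u hu
        rcases hcov u with h|h|h|h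
        · rw [h, Function.update_of_ne hsa, hss]; exact hβd b s nbs
        · rw [h, Function.update_self]; exact hβd b a nba
        · exact absurd h hu
        · rw [h, Function.update_of_ne n3a, h3]; exact hβd b 3 hb3
      · funext v
        rcases hcov v with h|h|h|h <;> subst h <;>
          simp [ap, Function.update_apply, nas, nbs, n3s, nba, n3a, n3b, hsa, hsb, hab,
            hs3, ha3, hb3, hss, h3]
      · simp [cnt, List.filter_cons, nba]
      · simp [cnt, List.filter_cons, hab]
      · simp [cnt, List.filter_cons, nas, nbs]
      · simp [cnt, List.filter_cons, ha3, hb3]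
      · intro _; simp [cnt, List.filter_cons, nba]

/-- Finish when `s` must still move and `h` currently holds `β s`. -/
lemma finish_aux (hℓ : 6 ≤ ℓ) (γ β : Col ℓ)
    (hγ : Function.Injective γ) (hβ : Function.Injective β)
    (s h o : Fin 4)
    (hcov : ∀ v : Fin 4, v = s ∨ v = h ∨ v = o ∨ v = 3)
    (hs3 : s ≠ 3) (hh3 : h ≠ 3) (ho3 : o ≠ 3)
    (hsh : s ≠ h) (hso : s ≠ o) (hho : h ≠ o)
    (h3 : γ 3 = β 3) (hss : γ s ≠ β s) (hold : γ h = β s) :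
    ∃ ms, Good γ ms ∧ ap γ ms = β ∧
      cnt s ms ≤ 1 ∧ cnt h ms ≤ 2 ∧ cnt o ms ≤ 1 ∧ cnt 3 ms = 0 := by
  have nhs : ¬(h = s) := fun e => hsh e.symm
  have nos : ¬(o = s) := fun e => hso e.symm
  have n3s : ¬((3:Fin 4) = s) := fun e => hs3 e.symm
  have noh : ¬(o = h) := fun e => hho e.symm
  have n3h : ¬((3:Fin 4) = h) := fun e => hh3 e.symm
  have hβd : ∀ x y : Fin 4, x ≠ y → β x ≠ β y := fun x y hxy e => hxy (hβ e)
  have hγd : ∀ x y : Fin 4, x ≠ y → γ x ≠ γ y := fun x y hxy e => hxy (hγ e)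
  obtain ⟨f, hf⟩ := exists_notin hℓ {γ s, γ h, γ o, γ 3, β o} (by
    refine le_trans (Finset.card_insert_le _ _) ?_
    refine Nat.succ_le_succ (le_trans (Finset.card_insert_le _ _) ?_)
    refine Nat.succ_le_succ (le_trans (Finset.card_insert_le _ _) ?_)
    refine Nat.succ_le_succ (le_trans (Finset.card_insert_le _ _) ?_)
    simp)
  have hfs : f ≠ γ s := fun e => hf (by simp [e])
  have hfh : f ≠ γ h := fun e => hf (by simp [e])
  have hfo : f ≠ γ o := fun e => hf (by simp [e])
  have hf3 : f ≠ γ 3 := fun e => hf (by simp [e])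
  have hfβo : f ≠ β o := fun e => hf (by simp [e])
  have hfβs : f ≠ β s := hold ▸ hfh
  set γ₂ : Col ℓ := ap γ [(h, f), (s, β s)] with hγ₂def
  have g2s : γ₂ s = β s := by
    simp [hγ₂def, ap, Function.update_apply]
  have g2h : γ₂ h = f := by
    simp [hγ₂def, ap, Function.update_apply, nhs]
  have g2o : γ₂ o = γ o := by
    simp [hγ₂def, ap, Function.update_apply, nos, noh]
  have g23 : γ₂ 3 = β 3 := by
    simp [hγ₂def, ap, Function.update_apply, n3s, n3h, h3]
  have hgood_pre : Good γ [(h, f), (s, β s)] := by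
    refine ⟨hfh, ?_, ?_, ?_, trivial⟩
    · intro u hu
      rcases hcov u with e|e|e|e
      exacts [e ▸ hfs, absurd e hu, e ▸ hfo, e ▸ hf3]
    · rw [Function.update_of_ne hsh]
      exact fun e => hss e.symm
    · intro u hu
      rcases hcov u with e|e|e|e
      · exact absurd e hu
      · rw [e, Function.update_self]; exact fun e2 => hfβs e2.symm
      · rw [e, Function.update_of_ne noh, ← hold]; exact hγd h o hho
      · rw [e, Function.update_of_ne n3h, h3]; exact hβd s 3 hs3
  have hγ₂inj : Function.Injective γ₂ := inj_ap hγ hgood_pre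
  obtain ⟨tail, htg, htap, hth, hto, hts, ht3, hth1⟩ :=
    fin2 hℓ γ₂ β hγ₂inj hβ s h o hcov hs3 hh3 ho3 hsh hso hho g23 g2s
  have hth1' : cnt h tail ≤ 1 := hth1 (by rw [g2h]; exact hfβo)
  refine ⟨[(h, f), (s, β s)] ++ tail, good_append.2 ⟨hgood_pre, htg⟩, ?_, ?_, ?_, ?_, ?_⟩
  · rw [ap_append, ← hγ₂def, htap]
  · rw [cnt_append]
    have : cnt s [(h, f), (s, β s)] = 1 := by simp [cnt, List.filter_cons, nhs]
    omega
  · rw [cnt_append]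
    have : cnt h [(h, f), (s, β s)] = 1 := by simp [cnt, List.filter_cons, hsh]
    omega
  · rw [cnt_append]
    have : cnt o [(h, f), (s, β s)] = 0 := by simp [cnt, List.filter_cons, hho, hso]
    omega
  · rw [cnt_append]
    have : cnt 3 [(h, f), (s, β s)] = 0 := by simp [cnt, List.filter_cons, hh3, hs3]
    omega

/-- From any proper `γ` agreeing with `β` on vertex `3`, reach `β` moving `s` at
most once, and `a`, `b` at most twice each. -/
lemma finish (hℓ : 6 ≤ ℓ) (γ β : Col ℓ)
    (hγ : Function.Injective γ) (hβ : Function.Injective β)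
    (s a b : Fin 4)
    (hcov : ∀ v : Fin 4, v = s ∨ v = a ∨ v = b ∨ v = 3)
    (hs3 : s ≠ 3) (ha3 : a ≠ 3) (hb3 : b ≠ 3)
    (hsa : s ≠ a) (hsb : s ≠ b) (hab : a ≠ b)
    (h3 : γ 3 = β 3) :
    ∃ ms, Good γ ms ∧ ap γ ms = β ∧
      cnt s ms ≤ 1 ∧ cnt a ms ≤ 2 ∧ cnt b ms ≤ 2 ∧ cnt 3 ms = 0 := by
  have hβd : ∀ x y : Fin 4, x ≠ y → β x ≠ β y := fun x y hxy e => hxy (hβ e)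
  by_cases hss : γ s = β s
  · obtain ⟨ms, h1, h2, h3', h4, h5, h6, _⟩ :=
      fin2 hℓ γ β hγ hβ s a b hcov hs3 ha3 hb3 hsa hsb hab h3 hss
    exact ⟨ms, h1, h2, by omega, h3', by omega, h6⟩
  · by_cases hha : γ a = β s
    · obtain ⟨ms, h1, h2, h3', h4, h5, h6⟩ :=
        finish_aux hℓ γ β hγ hβ s a b hcov hs3 ha3 hb3 hsa hsb hab h3 hss hha
      exact ⟨ms, h1, h2, h3', h4, by omega, h6⟩
    · by_cases hhb : γ b = β s
      · have hcov' : ∀ v : Fin 4, v = s ∨ v = b ∨ v = a ∨ v = 3 := by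
          intro v; rcases hcov v with e|e|e|e <;> tauto
        obtain ⟨ms, h1, h2, h3', h4, h5, h6⟩ :=
          finish_aux hℓ γ β hγ hβ s b a hcov' hs3 hb3 ha3 hsb hsa
            (fun e => hab e.symm) h3 hss hhb
        exact ⟨ms, h1, h2, h3', by omega, by omega, h6⟩
      · -- nobody holds β s: move s home, then finish a and b
        have hmove : ∀ u, u ≠ s → β s ≠ γ u := by
          intro u hu
          rcases hcov u with e|e|e|e
          · exact absurd e hu
          · rw [e]; exact fun e2 => hha e2.symm
          · rw [e]; exact fun e2 => hhb e2.symm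
          · rw [e, h3]; exact hβd s 3 hs3
        set γ' : Col ℓ := Function.update γ s (β s) with hγ'def
        have hγ'inj : Function.Injective γ' := inj_update hγ hmove
        have hg3 : γ' 3 = β 3 := by
          rw [hγ'def, Function.update_of_ne (fun e => hs3 e.symm), h3]
        have hgs : γ' s = β s := by rw [hγ'def, Function.update_self]
        obtain ⟨ms, h1, h2, h3', h4, h5, h6, _⟩ :=
          fin2 hℓ γ' β hγ'inj hβ s a b hcov hs3 ha3 hb3 hsa hsb hab hg3 hgs
        refine ⟨(s, β s) :: ms, ⟨fun e => hss e.symm, hmove, h1⟩, h2, ?_, ?_, ?_, ?_⟩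
        · rw [cnt_cons_same]; omega
        · rw [cnt_cons_diff hsa]; omega
        · rw [cnt_cons_diff hsb]; omega
        · rw [cnt_cons_diff hs3]; exact h6


lemma bridge : ∀ (ms : List (Fin 4 × Fin ℓ)) (γ : Col ℓ), Function.Injective γ →
    Good γ ms →
    ∃ c : Fin (ms.length + 1) → Fin 4 → Fin ℓ,
      IsTransformSeq (⊤ : SimpleGraph (Fin 4)) c γ (ap γ ms) ∧
      (∀ v, RecolorCount c v = cnt v ms) ∧
      (∀ v, ColorTrace c v = γ v :: trc v ms)
  | [], γ, hγ, _ => by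
    refine ⟨fun _ => γ, ⟨rfl, rfl, fun _ => (proper_iff_inj γ).2 hγ, fun i => i.elim0⟩,
        fun v => ?_, fun v => ?_⟩
    · simp [RecolorCount, cnt]
    · simp [ColorTrace, cnt, trc, List.ofFn_succ]
  | m :: ms, γ, hγ, hg => by
    obtain ⟨hne, hoth, hg'⟩ := hg
    set γ' := Function.update γ m.1 m.2 with hγ'def
    have hγ' : Function.Injective γ' := inj_update hγ hoth
    obtain ⟨c, ⟨hc0, hclast, hcprop, hcdiff⟩, hccnt, hctrc⟩ := bridge ms γ' hγ' hg'
    have hlen : (m :: ms).length = ms.length + 1 := rfl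
    set c' : Fin (ms.length + 2) → Col ℓ := Fin.cases γ c with hc'def
    have hc'z : c' 0 = γ := rfl
    have hc's : ∀ j : Fin (ms.length + 1), c' j.succ = c j := fun j => by
      simp [hc'def]
    have hgvne : γ m.1 ≠ γ' m.1 := by
      simp only [hγ'def, Function.update_self]; exact fun h => hne h.symm
    have hgveq : ∀ u, u ≠ m.1 → γ u = γ' u := fun u hu => by
      simp [hγ'def, Function.update_of_ne hu]
    refine ⟨c', ⟨rfl, ?_, ?_, ?_⟩, ?_, ?_⟩
    · show c' (Fin.last (ms.length + 1)) = ap γ (m :: ms)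
      have : (Fin.last (ms.length + 1)) = (Fin.last ms.length).succ := by
        simp [Fin.succ_last]
      rw [this, hc's]
      exact hclast
    · intro i
      induction i using Fin.cases with
      | zero => exact (proper_iff_inj γ).2 hγ
      | succ j => rw [hc's]; exact hcprop j
    · intro i
      induction i using Fin.cases with
      | zero =>
        have ez : (0 : Fin (ms.length + 1)).castSucc = 0 := rfl
        have eo : (0 : Fin (ms.length + 1)).succ = Fin.succ 0 := rfl
        refine ⟨m.1, ?_, ?_⟩
        · rw [ez, eo, hc's, hc'z, hc0]
          exact hgvne
        · intro v hv
          rw [ez, eo, hc's, hc'z, hc0] at hv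
          by_contra hvm
          exact hv (hgveq v hvm)
      | succ j =>
        have e1 : (j.succ : Fin (ms.length + 1)).castSucc = (j.castSucc).succ := rfl
        have e2 : (j.succ : Fin (ms.length + 1)).succ = (j.succ).succ := rfl
        rw [e1, e2, hc's, hc's]
        exact hcdiff j
    · intro v
      have hsum : RecolorCount c' v =
          ((if c' ((0:Fin (ms.length+1)).castSucc) v ≠ c' ((0:Fin (ms.length+1)).succ) v
            then 1 else 0) : ℕ) + RecolorCount c v := by
        rw [RecolorCount, Finset.card_filter, Fin.sum_univ_succ]
        congr 1
        rw [RecolorCount, Finset.card_filter]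
        apply Finset.sum_congr rfl
        intro j _
        have e1 : (j.succ : Fin (ms.length + 1)).castSucc = (j.castSucc).succ := rfl
        have e2 : (j.succ : Fin (ms.length + 1)).succ = (j.succ).succ := rfl
        rw [e1, e2, hc's, hc's]
      rw [hsum, hccnt v]
      have ez : (0 : Fin (ms.length + 1)).castSucc = 0 := rfl
      have eo : (0 : Fin (ms.length + 1)).succ = Fin.succ 0 := rfl
      rw [ez, eo, hc's, hc'z, hc0]
      by_cases hv : v = m.1
      · subst hv
        rw [if_pos hgvne]
        simp [cnt, List.filter_cons]
        omega
      · rw [if_neg (by simp [hgveq v hv])]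
        have hmv : ¬ (m.1 = v) := fun h => hv h.symm
        simp [cnt, List.filter_cons, hmv]
    · intro v
      have hofn : (List.ofFn fun i : Fin (ms.length + 2) => c' i v)
          = γ v :: List.ofFn fun i : Fin (ms.length + 1) => c i v := by
        rw [List.ofFn_succ]
        congr 1
      have hofn2 : (List.ofFn fun i : Fin (ms.length + 1) => c i v)
          = γ' v :: List.ofFn fun i : Fin ms.length => c i.succ v := by
        rw [List.ofFn_succ, hc0]
      show (List.ofFn fun i : Fin (ms.length + 2) => c' i v).destutter (· ≠ ·)
          = γ v :: trc v (m :: ms)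
      rw [hofn, hofn2]
      by_cases hv : v = m.1
      · have hgvne' : γ v ≠ γ' v := by rw [hv]; exact hgvne
        rw [List.destutter_cons_cons, if_pos hgvne', ← List.destutter_cons', ← hofn2]
        have htr := hctrc v
        rw [ColorTrace] at htr
        rw [htr]
        have hv2 : γ' v = m.2 := by simp [hγ'def, hv]
        have hmv : (m.1 = v) := hv.symm
        simp [trc, hv2, List.filter_cons, hmv]
      · rw [List.destutter_cons_cons, if_neg (by simp [hgveq v hv]), ← List.destutter_cons',
          hgveq v hv, ← hofn2]
        have htr := hctrc v
        rw [ColorTrace] at htr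
        rw [htr]
        have hmv : ¬ (m.1 = v) := fun h => hv h.symm
        simp [trc, List.filter_cons, hmv]

lemma trc_nil_of_cnt {v : Fin 4} {ms : List (Fin 4 × Fin ℓ)} (h : cnt v ms = 0) :
    trc v ms = [] := by
  unfold cnt at h
  rw [List.length_eq_zero_iff] at h
  unfold trc
  rw [h]
  rfl

/-- The full move list for `q = 3`. -/
lemma main3 (hℓ : 6 ≤ ℓ) (cs : Fin 4 → Fin ℓ)
    (hcs : ∀ i : Fin 3, cs i.castSucc ≠ cs i.succ)
    (α β : Col ℓ) (hαi : Function.Injective α) (hβi : Function.Injective β)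
    (hα4 : α 3 = cs 0) (hβ4 : β 3 = cs 3) :
    ∃ ms, Good α ms ∧ ap α ms = β ∧ (∀ v, cnt v ms ≤ 3) ∧
      α 3 :: trc 3 ms = List.ofFn cs := by
  have e01 : cs 0 ≠ cs 1 := hcs 0
  have e12 : cs 1 ≠ cs 2 := hcs 1
  have e23 : cs 2 ≠ cs 3 := hcs 2
  obtain ⟨ms1, g1, inj1, h31, c31, t31, post1a, post1b⟩ :=
    step hℓ α hαi (cs 1) (by rw [hα4]; exact e01.symm) {cs 2} (by simp)
  set γ1 : Col ℓ := ap α ms1 with hγ1def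
  obtain ⟨ms2, g2, inj2, h32, c32, t32, post2a, post2b⟩ :=
    step hℓ γ1 inj1 (cs 2) (by rw [h31]; exact e12.symm) {cs 3} (by simp)
  set γ2 : Col ℓ := ap γ1 ms2 with hγ2def
  obtain ⟨ms3, g3, inj3, h33, c33, t33, post3a, post3b⟩ :=
    step hℓ γ2 inj2 (cs 3) (by rw [h32]; exact e23.symm) ∅ (by simp)
  set γ3 : Col ℓ := ap γ2 ms3 with hγ3def
  set W : List (Fin 4 × Fin ℓ) := ms1 ++ ms2 ++ ms3 with hWdef
  have hWgood : Good α W := by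
    rw [hWdef]
    exact good_append.2 ⟨good_append.2 ⟨g1, g2⟩, by rw [ap_append]; exact g3⟩
  have hWap : ap α W = γ3 := by
    rw [hWdef, ap_append, ap_append, ← hγ1def, ← hγ2def, ← hγ3def]
  have hW3 : cnt 3 W = 3 := by
    rw [hWdef, cnt_append, cnt_append, c31, c32, c33]
  have hWtrc : trc 3 W = [cs 1, cs 2, cs 3] := by
    rw [hWdef, trc_append, trc_append, t31, t32, t33]
    rfl
  -- per-helper analysis of the walk
  have key : ∀ u : Fin 4, u ≠ 3 →
      cnt u W ≤ 2 ∧ (2 ≤ cnt u W → α u = cs 1) := by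
    intro u hu
    have hWcnt : cnt u W = cnt u ms1 + cnt u ms2 + cnt u ms3 := by
      rw [hWdef, cnt_append, cnt_append]
    by_cases h1 : α u = cs 1
    · obtain ⟨c1, hne1, hF1⟩ := post1b u hu h1
      have hg1u : γ1 u ≠ cs 2 := by
        intro e; exact hF1 (by simp [e])
      obtain ⟨e2, c2⟩ := post2a u hu hg1u
      by_cases h3 : γ2 u = cs 3
      · obtain ⟨c3, _, _⟩ := post3b u hu h3
        constructor
        · omega
        · intro _; exact h1
      · obtain ⟨_, c3⟩ := post3a u hu h3
        constructor
        · omega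
        · intro _; exact h1
    · obtain ⟨e1, c1⟩ := post1a u hu h1
      by_cases h2 : γ1 u = cs 2
      · obtain ⟨c2, hne2, hF2⟩ := post2b u hu h2
        have hg2u : γ2 u ≠ cs 3 := by
          intro e; exact hF2 (by simp [e])
        obtain ⟨_, c3⟩ := post3a u hu hg2u
        constructor
        · omega
        · intro hk; omega
      · obtain ⟨e2, c2⟩ := post2a u hu h2
        by_cases h3 : γ2 u = cs 3
        · obtain ⟨c3, _, _⟩ := post3b u hu h3
          constructor
          · omega
          · intro hk; omega
        · obtain ⟨_, c3⟩ := post3a u hu h3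
          constructor
          · omega
          · intro hk; omega
  have huniq : ∀ u w : Fin 4, u ≠ 3 → w ≠ 3 → 2 ≤ cnt u W → 2 ≤ cnt w W → u = w := by
    intro u w hu hw h2u h2w
    exact hαi (((key u hu).2 h2u).trans (((key w hw).2 h2w)).symm)
  have hγ33 : γ3 3 = β 3 := by rw [h33, hβ4]
  -- generic glue, given a choice of the special vertex
  have glue : ∀ s a b : Fin 4, (∀ v : Fin 4, v = s ∨ v = a ∨ v = b ∨ v = 3) →
      s ≠ 3 → a ≠ 3 → b ≠ 3 → s ≠ a → s ≠ b → a ≠ b →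
      cnt s W ≤ 2 → cnt a W ≤ 1 → cnt b W ≤ 1 →
      ∃ ms, Good α ms ∧ ap α ms = β ∧ (∀ v, cnt v ms ≤ 3) ∧
        α 3 :: trc 3 ms = List.ofFn cs := by
    intro s a b hcov hs3 ha3 hb3 hsa hsb hab hks hka hkb
    obtain ⟨msf, gf, apf, cfs, cfa, cfb, cf3⟩ :=
      finish hℓ γ3 β inj3 hβi s a b hcov hs3 ha3 hb3 hsa hsb hab hγ33
    refine ⟨W ++ msf, good_append.2 ⟨hWgood, by rw [hWap]; exact gf⟩, ?_, ?_, ?_⟩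
    · rw [ap_append, hWap, apf]
    · intro v
      rw [cnt_append]
      rcases hcov v with e|e|e|e <;> rw [e] <;> omega
    · rw [trc_append, hWtrc, trc_nil_of_cnt cf3, hα4]
      rfl
  by_cases H0 : 2 ≤ cnt 0 W
  · refine glue 0 1 2 (by decide) (by decide) (by decide) (by decide) (by decide)
      (by decide) (by decide) (key 0 (by decide)).1 ?_ ?_
    · by_contra hk
      push_neg at hk
      have := huniq 0 1 (by decide) (by decide) H0 (by omega)
      exact absurd this (by decide)
    · by_contra hk
      push_neg at hk
      have := huniq 0 2 (by decide) (by decide) H0 (by omega)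
      exact absurd this (by decide)
  · by_cases H1 : 2 ≤ cnt 1 W
    · refine glue 1 0 2 (by decide) (by decide) (by decide) (by decide) (by decide)
        (by decide) (by decide) (key 1 (by decide)).1 (by omega) ?_
      by_contra hk
      push_neg at hk
      have := huniq 1 2 (by decide) (by decide) H1 (by omega)
      exact absurd this (by decide)
    · by_cases H2 : 2 ≤ cnt 2 W
      · exact glue 2 0 1 (by decide) (by decide) (by decide) (by decide) (by decide)
          (by decide) (by decide) (key 2 (by decide)).1 (by omega) (by omega)
      · exact glue 0 1 2 (by decide) (by decide) (by decide) (by decide) (by decide)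
          (by decide) (by decide) (by omega) (by omega) (by omega)


/-- The full move list for `q = 2`. -/
lemma main2 (hℓ : 6 ≤ ℓ) (cs : Fin 3 → Fin ℓ)
    (hcs : ∀ i : Fin 2, cs i.castSucc ≠ cs i.succ)
    (α β : Col ℓ) (hαi : Function.Injective α) (hβi : Function.Injective β)
    (hα4 : α 3 = cs 0) (hβ4 : β 3 = cs 2) :
    ∃ ms, Good α ms ∧ ap α ms = β ∧ (∀ v, cnt v ms ≤ 3) ∧
      α 3 :: trc 3 ms = List.ofFn cs := by
  have e01 : cs 0 ≠ cs 1 := hcs 0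
  have e12 : cs 1 ≠ cs 2 := hcs 1
  obtain ⟨ms1, g1, inj1, h31, c31, t31, post1a, post1b⟩ :=
    step hℓ α hαi (cs 1) (by rw [hα4]; exact e01.symm) {cs 2} (by simp)
  set γ1 : Col ℓ := ap α ms1 with hγ1def
  obtain ⟨ms2, g2, inj2, h32, c32, t32, post2a, post2b⟩ :=
    step hℓ γ1 inj1 (cs 2) (by rw [h31]; exact e12.symm) ∅ (by simp)
  set γ2 : Col ℓ := ap γ1 ms2 with hγ2def
  set W : List (Fin 4 × Fin ℓ) := ms1 ++ ms2 with hWdef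
  have hWgood : Good α W := good_append.2 ⟨g1, g2⟩
  have hWap : ap α W = γ2 := by
    rw [hWdef, ap_append, ← hγ1def, ← hγ2def]
  have hW3 : cnt 3 W = 2 := by
    rw [hWdef, cnt_append, c31, c32]
  have hWtrc : trc 3 W = [cs 1, cs 2] := by
    rw [hWdef, trc_append, t31, t32]
    rfl
  have key : ∀ u : Fin 4, u ≠ 3 → cnt u W ≤ 1 := by
    intro u hu
    have hWcnt : cnt u W = cnt u ms1 + cnt u ms2 := by rw [hWdef, cnt_append]
    by_cases h1 : α u = cs 1
    · obtain ⟨c1, hne1, hF1⟩ := post1b u hu h1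
      have hg1u : γ1 u ≠ cs 2 := by
        intro e; exact hF1 (by simp [e])
      obtain ⟨_, c2⟩ := post2a u hu hg1u
      omega
    · obtain ⟨e1, c1⟩ := post1a u hu h1
      by_cases h2 : γ1 u = cs 2
      · obtain ⟨c2, _, _⟩ := post2b u hu h2
        omega
      · obtain ⟨_, c2⟩ := post2a u hu h2
        omega
  have hγ23 : γ2 3 = β 3 := by rw [h32, hβ4]
  obtain ⟨msf, gf, apf, cfs, cfa, cfb, cf3⟩ :=
    finish hℓ γ2 β inj2 hβi 0 1 2 (by decide) (by decide) (by decide) (by decide)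
      (by decide) (by decide) (by decide) hγ23
  refine ⟨W ++ msf, good_append.2 ⟨hWgood, by rw [hWap]; exact gf⟩, ?_, ?_, ?_⟩
  · rw [ap_append, hWap, apf]
  · intro v
    rw [cnt_append]
    have k0 := key 0 (by decide)
    have k1 := key 1 (by decide)
    have k2 := key 2 (by decide)
    have hcov4 : ∀ v : Fin 4, v = 0 ∨ v = 1 ∨ v = 2 ∨ v = 3 := by decide
    rcases hcov4 v with e|e|e|e <;> rw [e] <;> omega
  · rw [trc_append, hWtrc, trc_nil_of_cnt cf3, hα4]
    rfl

/-- The full move list for `q = 1`. -/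
lemma main1 (hℓ : 6 ≤ ℓ) (cs : Fin 2 → Fin ℓ)
    (hcs : ∀ i : Fin 1, cs i.castSucc ≠ cs i.succ)
    (α β : Col ℓ) (hαi : Function.Injective α) (hβi : Function.Injective β)
    (hα4 : α 3 = cs 0) (hβ4 : β 3 = cs 1) :
    ∃ ms, Good α ms ∧ ap α ms = β ∧ (∀ v, cnt v ms ≤ 3) ∧
      α 3 :: trc 3 ms = List.ofFn cs := by
  have e01 : cs 0 ≠ cs 1 := hcs 0
  obtain ⟨ms1, g1, inj1, h31, c31, t31, post1a, post1b⟩ :=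
    step hℓ α hαi (cs 1) (by rw [hα4]; exact e01.symm) ∅ (by simp)
  set γ1 : Col ℓ := ap α ms1 with hγ1def
  have key : ∀ u : Fin 4, u ≠ 3 → cnt u ms1 ≤ 1 := by
    intro u hu
    by_cases h1 : α u = cs 1
    · obtain ⟨c1, _, _⟩ := post1b u hu h1
      omega
    · obtain ⟨_, c1⟩ := post1a u hu h1
      omega
  have hγ13 : γ1 3 = β 3 := by rw [h31, hβ4]
  obtain ⟨msf, gf, apf, cfs, cfa, cfb, cf3⟩ :=
    finish hℓ γ1 β inj1 hβi 0 1 2 (by decide) (by decide) (by decide) (by decide)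
      (by decide) (by decide) (by decide) hγ13
  refine ⟨ms1 ++ msf, good_append.2 ⟨g1, by rw [← hγ1def]; exact gf⟩, ?_, ?_, ?_⟩
  · rw [ap_append, ← hγ1def, apf]
  · intro v
    rw [cnt_append]
    have k0 := key 0 (by decide)
    have k1 := key 1 (by decide)
    have k2 := key 2 (by decide)
    have hcov4 : ∀ v : Fin 4, v = 0 ∨ v = 1 ∨ v = 2 ∨ v = 3 := by decide
    rcases hcov4 v with e|e|e|e <;> rw [e] <;> omega
  · rw [trc_append, t31, trc_nil_of_cnt cf3, hα4]
    rfl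

/-- The full move list for `q = 0`. -/
lemma main0 (hℓ : 6 ≤ ℓ) (cs : Fin 1 → Fin ℓ)
    (α β : Col ℓ) (hαi : Function.Injective α) (hβi : Function.Injective β)
    (hα4 : α 3 = cs 0) (hβ4 : β 3 = cs 0) :
    ∃ ms, Good α ms ∧ ap α ms = β ∧ (∀ v, cnt v ms ≤ 3) ∧
      α 3 :: trc 3 ms = List.ofFn cs := by
  have h3 : α 3 = β 3 := by rw [hα4, hβ4]
  obtain ⟨msf, gf, apf, cfs, cfa, cfb, cf3⟩ :=
    finish hℓ α β hαi hβi 0 1 2 (by decide) (by decide) (by decide) (by decide)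
      (by decide) (by decide) (by decide) h3
  refine ⟨msf, gf, apf, ?_, ?_⟩
  · intro v
    have hcov4 : ∀ v : Fin 4, v = 0 ∨ v = 1 ∨ v = 2 ∨ v = 3 := by decide
    rcases hcov4 v with e|e|e|e <;> rw [e] <;> omega
  · rw [trc_nil_of_cnt cf3, hα4]
    rfl

end K4X

theorem k4_prescribed_order_recolor_six_colors
    (ℓ q : ℕ) (hℓ : 6 ≤ ℓ) (hq : q ≤ 3)
    (cs : Fin (q + 1) → Fin ℓ) (hcs : ∀ i : Fin q, cs i.castSucc ≠ cs i.succ)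
    (α β : Fin 4 → Fin ℓ)
    (hα : IsProperColoring (⊤ : SimpleGraph (Fin 4)) α)
    (hβ : IsProperColoring (⊤ : SimpleGraph (Fin 4)) β)
    (hα4 : α 3 = cs 0) (hβ4 : β 3 = cs (Fin.last q)) :
    ∃ (m : ℕ) (c : Fin (m + 1) → Fin 4 → Fin ℓ),
      IsTransformSeq (⊤ : SimpleGraph (Fin 4)) c α β ∧
      (∀ v : Fin 4, RecolorCount c v ≤ 3) ∧
      ColorTrace c (3 : Fin 4) = List.ofFn cs := by
  have hαi : Function.Injective α := (K4X.proper_iff_inj α).1 hα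
  have hβi : Function.Injective β := (K4X.proper_iff_inj β).1 hβ
  have wrap : ∀ ms : List (Fin 4 × Fin ℓ), K4X.Good α ms → K4X.ap α ms = β →
      (∀ v, K4X.cnt v ms ≤ 3) → α 3 :: K4X.trc 3 ms = List.ofFn cs →
      ∃ (m : ℕ) (c : Fin (m + 1) → Fin 4 → Fin ℓ),
        IsTransformSeq (⊤ : SimpleGraph (Fin 4)) c α β ∧
        (∀ v : Fin 4, RecolorCount c v ≤ 3) ∧
        ColorTrace c (3 : Fin 4) = List.ofFn cs := by
    intro ms hg hap hcnt htrc
    obtain ⟨c, hseq, hrc, htr⟩ := K4X.bridge ms α hαi hg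
    refine ⟨ms.length, c, ?_, ?_, ?_⟩
    · rwa [hap] at hseq
    · intro v; rw [hrc v]; exact hcnt v
    · rw [htr 3]; exact htrc
  interval_cases q
  · obtain ⟨ms, hg, hap, hcnt, htrc⟩ := K4X.main0 hℓ cs α β hαi hβi hα4 hβ4
    exact wrap ms hg hap hcnt htrc
  · obtain ⟨ms, hg, hap, hcnt, htrc⟩ := K4X.main1 hℓ cs hcs α β hαi hβi hα4 hβ4
    exact wrap ms hg hap hcnt htrc
  · obtain ⟨ms, hg, hap, hcnt, htrc⟩ := K4X.main2 hℓ cs hcs α β hαi hβi hα4 hβ4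
    exact wrap ms hg hap hcnt htrc
  · obtain ⟨ms, hg, hap, hcnt, htrc⟩ := K4X.main3 hℓ cs hcs α β hαi hβi hα4 hβ4
    exact wrap ms hg hap hcnt htrc
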